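/- Let K be a compact metric space, X an infinite compact metric space, and h : X → X a minimal homeomorphism. Fix z ∈ X. For m ≠ n in ℤ, the set S_{m,n} = { f ∈ C(X, K) : f(h^m(z)) ≠ f(h^n(z)) } is open and, when K = [0,1]^d with d ≥ 1, dense in C(X, K) with the uniform metric. Consequently, for K = [0,1]^d there exists f ∈ C(X,K) such that the coordinates of I_f(z), i.e. the points f(h^k(z)) for k ∈ ℤ, are pairwise distinct. -/

import Mathlib

private lemma stmt16_distinct {X : Type} [MetricSpace X] [CompactSpace X] [Infinite X]
    (h : X ≃ₜ X)
    (hmin : ∀ x : X, Dense (Set.range fun n : ℤ => (h.toEquiv ^ n) x))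
    (z : X) {m n : ℤ} (hmn : m ≠ n) :
    (h.toEquiv ^ m) z ≠ (h.toEquiv ^ n) z := by
  set e := h.toEquiv
  intro heq
  set p := m - n with hpdef
  have hp : p ≠ 0 := sub_ne_zero.2 hmn
  have h1 : (e ^ p) ((e ^ n) z) = (e ^ n) z := by
    rw [← Equiv.Perm.mul_apply, ← zpow_add, hpdef, sub_add_cancel, heq]
  have h2 : (e ^ n) ((e ^ p) z) = (e ^ n) z := by
    rw [← Equiv.Perm.mul_apply, ← zpow_add, add_comm, zpow_add, Equiv.Perm.mul_apply, h1]
  have hz : (e ^ p) z = z := (e ^ n).injective h2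
  have horb : ∀ k : ℤ, (e ^ k) z = (e ^ (k % p)) z := by
    intro k
    conv_lhs => rw [← Int.emod_add_mul_ediv k p]
    rw [zpow_add, Equiv.Perm.mul_apply, zpow_mul,
      Equiv.Perm.zpow_apply_eq_self_of_apply_eq_self hz]
  have hfin : (Set.range fun k : ℤ => (e ^ k) z).Finite := by
    apply Set.Finite.subset ((Set.finite_Icc (0 : ℤ) |p|).image fun r => (e ^ r) z)
    rintro - ⟨k, rfl⟩
    exact ⟨k % p, ⟨Int.emod_nonneg k hp, (Int.emod_lt_abs k hp).le⟩, (horb k).symm⟩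
  have hdense := hmin z
  have : (Set.univ : Set X).Finite := by
    rw [← hdense.closure_eq, hfin.isClosed.closure_eq]
    exact hfin
  exact Set.infinite_univ this

private lemma stmt16_open {X : Type} [MetricSpace X] [CompactSpace X]
    {K : Type} [MetricSpace K] (a b : X) :
    IsOpen {f : C(X, K) | f a ≠ f b} := by
  have hcont : Continuous fun f : C(X, K) => (f a, f b) :=
    (continuous_eval_const a).prodMk (continuous_eval_const b)
  have : {f : C(X, K) | f a ≠ f b}
      = (fun f : C(X, K) => (f a, f b)) ⁻¹' (Set.diagonal K)ᶜ := by
    ext f; simp [Set.diagonal]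
  rw [this]
  exact (isClosed_diagonal.isOpen_compl).preimage hcont

private lemma stmt16_dense {X : Type} [MetricSpace X] [CompactSpace X] (a b : X) (hab : a ≠ b)
    (d : ℕ) (hd : 1 ≤ d) :
    Dense {f : C(X, Fin d → Set.Icc (0 : ℝ) 1) | f a ≠ f b} := by
  haveI : NeZero d := ⟨by omega⟩
  rw [Metric.dense_iff]
  intro f ε hε
  by_cases hfab : f a ≠ f b
  · exact ⟨f, Metric.mem_ball_self hε, hfab⟩
  push_neg at hfab
  obtain ⟨u, hu0, hu1, hu01⟩ := exists_continuous_zero_one_of_isClosed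
    (isClosed_singleton (x := a)) (isClosed_singleton (x := b))
    (Set.disjoint_singleton.2 hab)
  have hua : u a = 0 := hu0 rfl
  have hub : u b = 1 := hu1 rfl
  set t : ℝ := min (ε / 2) (1 / 2) with ht
  have ht0 : 0 < t := lt_min (by linarith) (by norm_num)
  have ht1 : t ≤ 1 / 2 := min_le_right _ _
  have htε : t < ε := lt_of_le_of_lt (min_le_left _ _) (by linarith)
  set c : ℝ := if (f b 0 : ℝ) ≤ 1 / 2 then 1 else 0 with hc
  have hc01 : 0 ≤ c ∧ c ≤ 1 := by rw [hc]; split <;> norm_num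
  have hcb : c ≠ (f b 0 : ℝ) := by
    rw [hc]; split_ifs with h'
    · intro he; rw [← he] at h'; norm_num at h'
    · intro he; push_neg at h'; rw [← he] at h'; norm_num at h'
  have key : ∀ x : X, (1 - t * u x) * (f x 0 : ℝ) + t * u x * c ∈ Set.Icc (0:ℝ) 1 := by
    intro x
    have h1 := (hu01 x).1; have h2 := (hu01 x).2
    have h3 := (f x 0).2.1; have h4 := (f x 0).2.2
    have hs0 : 0 ≤ t * u x := mul_nonneg ht0.le h1
    have hs1 : t * u x ≤ 1 := by nlinarith
    constructor
    · nlinarith [mul_nonneg (by linarith : (0:ℝ) ≤ 1 - t * u x) h3,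
        mul_nonneg hs0 hc01.1]
    · nlinarith [mul_le_mul_of_nonneg_left h4 (by linarith : (0:ℝ) ≤ 1 - t * u x),
        mul_le_mul_of_nonneg_left hc01.2 hs0]
  set g : C(X, Fin d → Set.Icc (0 : ℝ) 1) :=
    ⟨fun x i => if i = 0 then ⟨(1 - t * u x) * (f x 0 : ℝ) + t * u x * c, key x⟩ else f x i, by
      apply continuous_pi
      intro i
      by_cases hi : i = 0
      · simp only [hi, if_pos rfl]
        apply Continuous.subtype_mk
        fun_prop
      · simp only [if_neg hi]
        exact (continuous_apply i).comp f.continuous⟩ with hg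
  refine ⟨g, ?_, ?_⟩
  · rw [Metric.mem_ball, ContinuousMap.dist_lt_iff hε]
    intro x
    rw [dist_pi_lt_iff hε]
    intro i
    by_cases hi : i = 0
    · subst hi
      have : g x 0 = ⟨(1 - t * u x) * (f x 0 : ℝ) + t * u x * c, key x⟩ := by
        simp [hg, ContinuousMap.coe_mk]
      rw [this, Subtype.dist_eq, Real.dist_eq]
      have e1 : ((1 - t * u x) * (f x 0 : ℝ) + t * u x * c) - (f x 0 : ℝ)
          = t * u x * (c - (f x 0 : ℝ)) := by ring
      rw [e1, abs_mul]
      have h1 := (hu01 x).1; have h2 := (hu01 x).2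
      have h3 := (f x 0).2.1; have h4 := (f x 0).2.2
      have hA : |t * u x| ≤ t := by
        rw [abs_of_nonneg (by positivity)]
        nlinarith
      have hB : |c - (f x 0 : ℝ)| ≤ 1 := abs_le.2 ⟨by linarith [hc01.1], by linarith [hc01.2]⟩
      calc |t * u x| * |c - (f x 0 : ℝ)| ≤ t * 1 :=
            mul_le_mul hA hB (abs_nonneg _) ht0.le
        _ < ε := by linarith
    · have : g x i = f x i := by simp [hg, ContinuousMap.coe_mk, if_neg hi]
      rw [this, dist_self]; exact hε
  · show g a ≠ g b
    intro hgab
    have ha : (g a 0 : ℝ) = (f a 0 : ℝ) := by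
      simp [hg, ContinuousMap.coe_mk, hua]
    have hb2 : (g b 0 : ℝ) = (1 - t) * (f b 0 : ℝ) + t * c := by
      simp [hg, ContinuousMap.coe_mk, hub]
    have := congrFun hgab 0
    rw [Subtype.ext_iff] at this
    rw [ha, hb2, hfab] at this
    have : t * (c - (f b 0 : ℝ)) = 0 := by linarith
    rcases mul_eq_zero.1 this with h' | h'
    · exact ht0.ne' h'
    · exact hcb (by linarith)

/-- For a minimal homeomorphism `h` of an infinite compact metric space `X` and a
point `z`, the sets `S_{m,n} = {f ∈ C(X,K) : f(h^m z) ≠ f(h^n z)}` are open for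
any compact metric `K`; for `K = [0,1]^d` (`d ≥ 1`) they are also dense, and
consequently there is `f ∈ C(X, [0,1]^d)` with the points `f(h^k z)`, `k ∈ ℤ`,
pairwise distinct. -/
theorem stmt_16 {X : Type} [MetricSpace X] [CompactSpace X] [Infinite X]
    (h : X ≃ₜ X)
    (hmin : ∀ x : X, Dense (Set.range fun n : ℤ => (h.toEquiv ^ n) x))
    (z : X) (d : ℕ) (hd : 1 ≤ d) :
    (∀ (K : Type) (_ : MetricSpace K), ∀ _ : CompactSpace K, ∀ m n : ℤ, m ≠ n →
      IsOpen {f : C(X, K) | f ((h.toEquiv ^ m) z) ≠ f ((h.toEquiv ^ n) z)}) ∧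
    (∀ m n : ℤ, m ≠ n →
      Dense {f : C(X, Fin d → Set.Icc (0 : ℝ) 1) |
        f ((h.toEquiv ^ m) z) ≠ f ((h.toEquiv ^ n) z)}) ∧
    ∃ f : C(X, Fin d → Set.Icc (0 : ℝ) 1), ∀ m n : ℤ, m ≠ n →
      f ((h.toEquiv ^ m) z) ≠ f ((h.toEquiv ^ n) z) := by
  refine ⟨fun K _ _ m n _ => stmt16_open _ _, fun m n hmn =>
    stmt16_dense _ _ (stmt16_distinct h hmin z hmn) d hd, ?_⟩
  set S : {p : ℤ × ℤ // p.1 ≠ p.2} → Set C(X, Fin d → Set.Icc (0 : ℝ) 1) :=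
    fun p => {f | f ((h.toEquiv ^ p.1.1) z) ≠ f ((h.toEquiv ^ p.1.2) z)} with hS
  have hdense : Dense (⋂ p, S p) :=
    dense_iInter_of_isOpen (fun p => stmt16_open _ _)
      (fun p => stmt16_dense _ _ (stmt16_distinct h hmin z p.2) d hd)
  obtain ⟨f, hf⟩ := hdense.nonempty
  exact ⟨f, fun m n hmn => Set.mem_iInter.1 hf ⟨(m, n), hmn⟩⟩
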